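/- Let G : ℝ^m → ℝ^m be continuously differentiable and suppose the square Krawczyk condition holds for (G, ŷ, r₂, A, ρ) with r₂ > 0 and ρ ∈ (0,1). Then the matrix A is invertible, and for every y ∈ J the Jacobian matrix D G(y) = (∂g_i/∂y_j(y)) is invertible. -/
import Mathlib


open Matrix Metric

/-- The (i,j) entry of the Jacobian matrix of `G` at `ξ`: `∂g_i/∂y_j (ξ)`. -/
noncomputable def pd {m : ℕ} (G : (Fin m → ℝ) → Fin m → ℝ)
    (ξ : Fin m → ℝ) (i j : Fin m) : ℝ :=
  fderiv ℝ G ξ (Pi.single j 1) i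

/-- The Jacobian matrix of `G` at `y`. -/
noncomputable def jacMat {m : ℕ} (G : (Fin m → ℝ) → Fin m → ℝ)
    (y : Fin m → ℝ) : Matrix (Fin m) (Fin m) ℝ :=
  Matrix.of fun i j => pd G y i j

/-- `M` is an `S`-mean-value Jacobian matrix of `G`. -/
def IsMVJac {m : ℕ} (G : (Fin m → ℝ) → Fin m → ℝ)
    (S : Set (Fin m → ℝ)) (M : Matrix (Fin m) (Fin m) ℝ) : Prop :=
  ∀ i : Fin m, ∃ ξ ∈ S, ∀ j : Fin m, M i j = pd G ξ i j

/-- The square Krawczyk condition for `(G, yh, r₂, A, ρ)`. -/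
def SquareKrawczykCond {m : ℕ} (G : (Fin m → ℝ) → Fin m → ℝ)
    (yh : Fin m → ℝ) (r₂ : ℝ) (A : Matrix (Fin m) (Fin m) ℝ) (ρ : ℝ) : Prop :=
  ∀ y ∈ closedBall yh r₂,
    ∀ M : Matrix (Fin m) (Fin m) ℝ,
      IsMVJac G (closedBall yh r₂) M →
      ‖-(A.mulVec (G yh)) + (1 - A * M).mulVec (y - yh)‖ ≤ ρ * r₂


private lemma krawczyk_key {m : ℕ}
    (r₂ : ℝ) (hr₂ : 0 < r₂) (B : Matrix (Fin m) (Fin m) ℝ) (ρ : ℝ) (hρ1 : ρ < 1)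
    (h : ∀ v : Fin m → ℝ, ‖v‖ ≤ r₂ → ‖(1 - B).mulVec v‖ ≤ ρ * r₂) :
    IsUnit B := by
  rw [← Matrix.mulVec_injective_iff_isUnit]
  intro a b hab
  by_contra hne
  set v := a - b with hv
  have hv0 : v ≠ 0 := sub_ne_zero.mpr hne
  have hBv : B.mulVec v = 0 := by
    simp [hv, Matrix.mulVec_sub, hab]
  set w := (r₂ / ‖v‖) • v with hw
  have hnw : ‖w‖ = r₂ := by
    rw [hw, norm_smul, norm_div, Real.norm_eq_abs, abs_of_pos hr₂, norm_norm,
      div_mul_cancel₀ _ (norm_ne_zero_iff.mpr hv0)]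
  have hBw : B.mulVec w = 0 := by
    rw [hw, Matrix.mulVec_smul, hBv, smul_zero]
  have := h w (le_of_eq hnw)
  rw [Matrix.sub_mulVec, Matrix.one_mulVec, hBw, sub_zero, hnw] at this
  nlinarith

/-- Under the square Krawczyk condition, `A` is invertible and the Jacobian of `G` is invertible
at every point of `J`. -/
theorem krawczyk_implies_invertible {m : ℕ}
    (G : (Fin m → ℝ) → Fin m → ℝ) (hG : ContDiff ℝ 1 G)
    (yh : Fin m → ℝ) (r₂ : ℝ) (hr₂ : 0 < r₂)
    (A : Matrix (Fin m) (Fin m) ℝ) (ρ : ℝ) (hρ0 : 0 < ρ) (hρ1 : ρ < 1)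
    (hK : SquareKrawczykCond G yh r₂ A ρ) :
    IsUnit A ∧ ∀ y ∈ closedBall yh r₂, IsUnit (jacMat G y) := by
  have main : ∀ y ∈ closedBall yh r₂, IsUnit (A * jacMat G y) := by
    intro y hy
    set M : Matrix (Fin m) (Fin m) ℝ := jacMat G y with hMdef
    have hM : IsMVJac G (closedBall yh r₂) M := fun i => ⟨y, hy, fun j => rfl⟩
    refine krawczyk_key r₂ hr₂ _ ρ hρ1 ?_
    intro v hv
    have hmem : ∀ u : Fin m → ℝ, ‖u‖ ≤ r₂ → yh + u ∈ closedBall yh r₂ := by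
      intro u hu
      rw [mem_closedBall_iff_norm, add_sub_cancel_left]
      exact hu
    have ha := hK (yh + v) (hmem v hv) M hM
    have hb := hK (yh + (-v)) (hmem (-v) (by simpa using hv)) M hM
    rw [add_sub_cancel_left] at ha hb
    set B := 1 - A * M
    have h2 : (2:ℝ) • B.mulVec v =
        (-(A.mulVec (G yh)) + B.mulVec v) - (-(A.mulVec (G yh)) + B.mulVec (-v)) := by
      rw [Matrix.mulVec_neg]
      module
    have hle : ‖(2:ℝ) • B.mulVec v‖ ≤ ρ * r₂ + ρ * r₂ := by
      rw [h2]
      exact (norm_sub_le _ _).trans (add_le_add ha hb)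
    rw [norm_smul] at hle
    simp only [Real.norm_ofNat] at hle
    linarith
  have hyh : yh ∈ closedBall yh r₂ := mem_closedBall_self hr₂.le
  constructor
  · have := (Matrix.isUnit_iff_isUnit_det _).mp (main yh hyh)
    rw [Matrix.det_mul] at this
    exact (Matrix.isUnit_iff_isUnit_det _).mpr (isUnit_of_mul_isUnit_left this)
  · intro y hy
    have := (Matrix.isUnit_iff_isUnit_det _).mp (main y hy)
    rw [Matrix.det_mul] at this
    exact (Matrix.isUnit_iff_isUnit_det _).mpr (isUnit_of_mul_isUnit_right this)
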